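/- The determinant of the inverse of the low-rank approximate covariance matrix satisfies det(Γ̂_cond^{-1}) = σ^n · det(L)² · ∏_{j=1}^k (1 + μλ_j/σ). -/

import Mathlib

open Matrix MeasureTheory ProbabilityTheory Finset

noncomputable section

theorem stmt13
    (m n : ℕ) (hm : 0 < m) (hn : 0 < n)
    (A : Matrix (Fin m) (Fin n) ℝ) (L : Matrix (Fin n) (Fin n) ℝ) (hL : IsUnit L.det)
    (μ σ : ℝ) (hμ : 0 < μ) (hσ : 0 < σ)
    (v : Fin n → Fin n → ℝ) (lam : Fin n → ℝ)
    (horth : ∀ i j, v i ⬝ᵥ v j = if i = j then (1 : ℝ) else 0)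
    (hlam_nonneg : ∀ j, 0 ≤ lam j) (hlam_anti : Antitone lam)
    (hHdecomp : (L⁻¹)ᵀ * Aᵀ * A * L⁻¹ = ∑ j, lam j • vecMulVec (v j) (v j))
    (k : ℕ) (hk : k ≤ n)
    (Γhat : Matrix (Fin n) (Fin n) ℝ)
    (hΓhat : Γhat = L⁻¹ * (σ • (1 : Matrix (Fin n) (Fin n) ℝ) +
        μ • ∑ j ∈ Finset.univ.filter (fun j : Fin n => (j : ℕ) < k),
          lam j • vecMulVec (v j) (v j))⁻¹ * (L⁻¹)ᵀ)
    :
    (Γhat⁻¹).det = σ ^ n * L.det ^ 2 *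
      ∏ j ∈ Finset.univ.filter (fun j : Fin n => (j : ℕ) < k), (1 + μ * lam j / σ) := by
  set M : Matrix (Fin n) (Fin n) ℝ :=
    σ • (1 : Matrix (Fin n) (Fin n) ℝ) +
      μ • ∑ j ∈ Finset.univ.filter (fun j : Fin n => (j : ℕ) < k),
        lam j • vecMulVec (v j) (v j) with hM
  set V : Matrix (Fin n) (Fin n) ℝ := Matrix.of v with hV
  have hVVt : V * Vᵀ = 1 := by
    ext i j
    simp [hV, Matrix.mul_apply, Matrix.one_apply, ← horth i j, dotProduct]
  have hVtV : Vᵀ * V = 1 := mul_eq_one_comm.mp hVVt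
  have hdetV : V.det * V.det = 1 := by
    have := congrArg Matrix.det hVVt
    simpa [Matrix.det_transpose] using this
  set d : Fin n → ℝ := fun j => σ + (if (j : ℕ) < k then μ * lam j else 0) with hd
  have hdpos : ∀ j, 0 < d j := by
    intro j
    simp only [hd]
    split
    · nlinarith [hlam_nonneg j]
    · simpa using hσ
  have hMdecomp : M = Vᵀ * Matrix.diagonal d * V := by
    ext i j
    have hone := congrFun (congrFun hVtV i) j
    simp only [Matrix.mul_apply, Matrix.transpose_apply, hV, Matrix.of_apply,
      Matrix.one_apply] at hone
    show M i j = (Vᵀ * Matrix.diagonal d * V) i j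
    rw [Matrix.mul_apply]
    have hR : ∀ b, (Vᵀ * Matrix.diagonal d) i b * V b j = d b * (v b i * v b j) := by
      intro b
      rw [Matrix.mul_diagonal]
      simp only [Matrix.transpose_apply, hV, Matrix.of_apply]
      ring
    simp only [hR]
    simp only [hM, Matrix.add_apply, Matrix.smul_apply, Matrix.one_apply, smul_eq_mul,
      Finset.sum_apply, Matrix.sum_apply, Matrix.vecMulVec_apply]
    have hfil : (∑ a ∈ Finset.univ.filter (fun a : Fin n => (a : ℕ) < k),
        lam a * (v a i * v a j))
        = ∑ a : Fin n, if (a : ℕ) < k then lam a * (v a i * v a j) else 0 :=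
      Finset.sum_filter _ _
    rw [← hone, hfil, Finset.mul_sum, Finset.mul_sum, ← Finset.sum_add_distrib]
    refine Finset.sum_congr rfl fun a _ => ?_
    simp only [hd]
    split <;> ring
  have hdetM : M.det = ∏ j, d j := by
    rw [hMdecomp, Matrix.det_mul, Matrix.det_mul, Matrix.det_transpose,
      Matrix.det_diagonal]
    calc V.det * (∏ j, d j) * V.det = (V.det * V.det) * ∏ j, d j := by ring
      _ = ∏ j, d j := by rw [hdetV, one_mul]
  have hdetLne : L.det ≠ 0 := hL.ne_zero
  have hprod : ∏ j, d j = σ ^ n *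
      ∏ j ∈ Finset.univ.filter (fun j : Fin n => (j : ℕ) < k), (1 + μ * lam j / σ) := by
    have h : ∀ j : Fin n, d j = σ * (if (j : ℕ) < k then 1 + μ * lam j / σ else 1) := by
      intro j
      simp only [hd]
      split
      · field_simp
      · simp
    simp_rw [h]
    rw [Finset.prod_mul_distrib, Finset.prod_const, Finset.card_univ, Fintype.card_fin,
      ← Finset.prod_filter]
  have hdetMval : M.det = σ ^ n *
      ∏ j ∈ Finset.univ.filter (fun j : Fin n => (j : ℕ) < k), (1 + μ * lam j / σ) := by
    rw [hdetM, hprod]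
  have hdetMne : M.det ≠ 0 := by
    rw [hdetM]
    exact (Finset.prod_pos fun j _ => hdpos j).ne'
  have hdetΓ : Γhat.det = (L.det)⁻¹ * (M.det)⁻¹ * (L.det)⁻¹ := by
    rw [hΓhat, Matrix.det_mul, Matrix.det_mul, Matrix.det_transpose,
      Matrix.det_nonsing_inv, Matrix.det_nonsing_inv, Ring.inverse_eq_inv,
      Ring.inverse_eq_inv]
  rw [Matrix.det_nonsing_inv, hdetΓ, Ring.inverse_eq_inv, mul_inv, mul_inv,
    inv_inv, inv_inv, hdetMval]
  ring
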